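/- Let L : X → X be a linear nonexpansive operator on a real Hilbert space X and x ∈ X. Then the iterates L^k x converge strongly to P_{Fix L}(x) if and only if L^k x − L^{k+1} x → 0 strongly. -/

import Mathlib

open Filter

variable {X : Type*} [NormedAddCommGroup X] [InnerProductSpace ℝ X] [CompleteSpace X]

/-- The fixed-point set `Fix L = {x : L x = x}` of a continuous linear operator,
as a (closed) subspace. -/
noncomputable def fixSpace (L : X →L[ℝ] X) : Submodule ℝ X :=
  LinearMap.ker ((ContinuousLinearMap.id ℝ X - L : X →L[ℝ] X) : X →ₗ[ℝ] X)

instance (L : X →L[ℝ] X) : CompleteSpace (fixSpace L) :=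
  (ContinuousLinearMap.isClosed_ker (ContinuousLinearMap.id ℝ X - L)).completeSpace_coe

open RealInnerProductSpace

set_option maxHeartbeats 1000000 in
/-- if `L : X → X` is linear nonexpansive on a real Hilbert space and `x ∈ X`, then
`L^k x → P_{Fix L} x` strongly iff `L^k x − L^{k+1} x → 0` strongly. -/
theorem stmt5 (L : X →L[ℝ] X) (hL : ∀ x, ‖L x‖ ≤ ‖x‖) (x : X) :
    Tendsto (fun k : ℕ => (L ^ k) x) atTop
        (nhds (Submodule.orthogonalProjectionOnto (fixSpace L) x : X)) ↔
      Tendsto (fun k : ℕ => (L ^ k) x - (L ^ (k + 1)) x) atTop (nhds 0) := by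
  set a : ℕ → X := fun k => (L ^ k) x with ha
  have hstep : ∀ k : ℕ, a (k + 1) = L (a k) := by
    intro k
    show (L ^ (k + 1)) x = L ((L ^ k) x)
    rw [pow_succ', ContinuousLinearMap.mul_apply]
  have hfix : ∀ u, u ∈ fixSpace L → L u = u := by
    intro u hu
    have h1 : (ContinuousLinearMap.id ℝ X - L) u = 0 := LinearMap.mem_ker.mp hu
    have h2 : u - L u = 0 := by simpa using h1
    exact (sub_eq_zero.mp h2).symm
  constructor
  · -- easy direction
    intro hT
    set q : X := (Submodule.orthogonalProjectionOnto (fixSpace L) x : X) with hq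
    have hqfix : L q = q := hfix q (SetLike.coe_mem _)
    have h1 : Tendsto (fun k => a (k + 1)) atTop (nhds q) :=
      hT.comp (tendsto_add_atTop_nat 1)
    have := hT.sub h1; rw [sub_self] at this; exact this
  · -- hard direction
    intro h
    have hpow : ∀ (k : ℕ) (y : X), ‖(L ^ k) y‖ ≤ ‖y‖ := by
      intro k
      induction k with
      | zero => intro y; simp
      | succ k ih =>
        intro y
        rw [pow_succ', ContinuousLinearMap.mul_apply]
        exact le_trans (hL _) (ih y)
    have hanti : Antitone fun k => ‖a k‖ := by
      refine antitone_nat_of_succ_le fun k => ?_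
      rw [hstep]; exact hL _
    have hbdd : BddBelow (Set.range fun k => ‖a k‖) := by
      refine ⟨0, ?_⟩; rintro y ⟨k, rfl⟩; exact norm_nonneg _
    set c : ℝ := ⨅ k, ‖a k‖ with hc
    have hcl : Tendsto (fun k => ‖a k‖) atTop (nhds c) :=
      tendsto_atTop_ciInf hanti hbdd
    have hc0 : 0 ≤ c := le_ciInf fun k => norm_nonneg _
    -- differences with fixed gap tend to zero
    have hdiff : ∀ j : ℕ, Tendsto (fun k => a k - a (k + j)) atTop (nhds 0) := by
      intro j
      induction j with
      | zero => simpa using (tendsto_const_nhds : Tendsto (fun _ : ℕ => (0 : X)) atTop _)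
      | succ j ih =>
        have h2 : Tendsto (fun k => a (k + j) - a (k + j + 1)) atTop (nhds 0) :=
          h.comp (tendsto_add_atTop_nat j)
        have h3 := ih.add h2
        rw [add_zero] at h3
        refine h3.congr fun k => ?_
        show a k - a (k + j) + (a (k + j) - a (k + j + 1)) = a k - a (k + (j + 1))
        rw [sub_add_sub_cancel, ← add_assoc]
    -- key lower bound
    have hkey : ∀ n m : ℕ, n ≤ m → 2 * c ≤ ‖a n + a m‖ := by
      intro n m hnm
      have hmono : ∀ k : ℕ, ‖a (n + k) + a (m + k)‖ ≤ ‖a n + a m‖ := by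
        intro k
        have e1 : (L ^ k) (a n) = a (n + k) := by
          show (L ^ k) ((L ^ n) x) = (L ^ (n + k)) x
          rw [add_comm, pow_add, ContinuousLinearMap.mul_apply]
        have e2 : (L ^ k) (a m) = a (m + k) := by
          show (L ^ k) ((L ^ m) x) = (L ^ (m + k)) x
          rw [add_comm, pow_add, ContinuousLinearMap.mul_apply]
        calc ‖a (n + k) + a (m + k)‖ = ‖(L ^ k) (a n + a m)‖ := by rw [map_add, e1, e2]
          _ ≤ ‖a n + a m‖ := hpow k _
      -- the norms tend to 2c
      have hd : Tendsto (fun k => a (n + k) - a (m + k)) atTop (nhds 0) := by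
        have h0 := (hdiff (m - n)).comp (tendsto_add_atTop_nat n)
        refine h0.congr fun k => ?_
        show a (k + n) - a (k + n + (m - n)) = a (n + k) - a (m + k)
        congr 2 <;> omega
      have hnorm2 : Tendsto (fun k => 2 * ‖a (m + k)‖) atTop (nhds (2 * c)) := by
        have h0 := (hcl.comp (tendsto_add_atTop_nat m)).const_mul 2
        refine h0.congr fun k => ?_
        show 2 * ‖a (k + m)‖ = 2 * ‖a (m + k)‖
        rw [Nat.add_comm]
      have hdist : Tendsto (fun k => |‖a (n + k) + a (m + k)‖ - 2 * ‖a (m + k)‖|)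
          atTop (nhds 0) := by
        have hb : ∀ k, |‖a (n + k) + a (m + k)‖ - 2 * ‖a (m + k)‖|
            ≤ ‖a (n + k) - a (m + k)‖ := by
          intro k
          have e3 : ‖(2 : ℝ) • a (m + k)‖ = 2 * ‖a (m + k)‖ := by
            rw [norm_smul]; simp
          calc |‖a (n + k) + a (m + k)‖ - 2 * ‖a (m + k)‖|
              = |‖a (n + k) + a (m + k)‖ - ‖(2 : ℝ) • a (m + k)‖| := by rw [e3]
            _ ≤ ‖a (n + k) + a (m + k) - (2 : ℝ) • a (m + k)‖ := abs_norm_sub_norm_le _ _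
            _ = ‖a (n + k) - a (m + k)‖ := by
                congr 1
                rw [two_smul]
                abel
        have hnd : Tendsto (fun k => ‖a (n + k) - a (m + k)‖) atTop (nhds 0) := by
          simpa using hd.norm
        exact squeeze_zero (fun k => abs_nonneg _) hb hnd
      have hlim : Tendsto (fun k => ‖a (n + k) + a (m + k)‖) atTop (nhds (2 * c)) := by
        have := hnorm2.add hdist
        have h4 : Tendsto (fun k => ‖a (n + k) + a (m + k)‖ - 2 * ‖a (m + k)‖)
            atTop (nhds 0) := by
          refine squeeze_zero_norm (fun k => ?_) hdist
          simp [Real.norm_eq_abs]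
        have h5 := h4.add hnorm2
        rw [zero_add] at h5
        refine h5.congr fun k => ?_
        ring
      exact le_of_tendsto hlim (Eventually.of_forall hmono)
    -- Cauchy
    have hcauchy : CauchySeq a := by
      rw [Metric.cauchySeq_iff]
      intro ε hε
      have hsq : Tendsto (fun k => ‖a k‖ ^ 2) atTop (nhds (c ^ 2)) := hcl.pow 2
      have hlt : c ^ 2 < c ^ 2 + ε ^ 2 / 4 := by nlinarith
      obtain ⟨N, hN⟩ := (hsq.eventually (eventually_lt_nhds hlt)).exists
      refine ⟨N, fun m hm n hn => ?_⟩
      have key : ∀ i j : ℕ, N ≤ i → i ≤ j → ‖a i - a j‖ < ε := by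
        intro i j hi hij
        have h1 : 2 * c ≤ ‖a i + a j‖ := hkey i j hij
        have pl := parallelogram_law_with_norm ℝ (a i) (a j)
        have h2 : ‖a i‖ ≤ ‖a N‖ := hanti hi
        have h3 : ‖a j‖ ≤ ‖a N‖ := hanti (le_trans hi hij)
        have h4 : (0 : ℝ) ≤ ‖a i‖ := norm_nonneg _
        have h5 : (0 : ℝ) ≤ ‖a j‖ := norm_nonneg _
        have h6 : (0 : ℝ) ≤ ‖a i - a j‖ := norm_nonneg _
        have h7 : ‖a i - a j‖ ^ 2 < ε ^ 2 := by nlinarith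
        exact lt_of_pow_lt_pow_left₀ 2 (le_of_lt hε) h7
      rw [dist_eq_norm]
      rcases le_total m n with hmn | hnm
      · exact key m n hm hmn
      · rw [← norm_neg, neg_sub]; exact key n m hn hnm
    obtain ⟨p, hp⟩ := cauchySeq_tendsto_of_complete hcauchy
    -- p is a fixed point
    have hLp : L p = p := by
      have h1 : Tendsto (fun k => a (k + 1)) atTop (nhds p) :=
        hp.comp (tendsto_add_atTop_nat 1)
      have h1' : Tendsto (fun k => L (a k)) atTop (nhds p) := by
        refine h1.congr fun k => hstep k
      have h2 : Tendsto (fun k => L (a k)) atTop (nhds (L p)) :=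
        (L.continuous.tendsto p).comp hp
      exact (tendsto_nhds_unique h2 h1')
    have hpmem : p ∈ fixSpace L := by
      rw [fixSpace, LinearMap.mem_ker]
      simp [hLp]
    -- norm bound on L
    have hLnorm : ‖L‖ ≤ 1 := by
      refine L.opNorm_le_bound zero_le_one fun y => ?_
      simpa using hL y
    -- fixed points of L are fixed points of the adjoint
    have hadj : ∀ u : X, L u = u → ContinuousLinearMap.adjoint L u = u := by
      intro u hu
      set v := ContinuousLinearMap.adjoint L u with hv
      have h1 : ‖v‖ ≤ ‖u‖ := by
        calc ‖v‖ ≤ ‖ContinuousLinearMap.adjoint L‖ * ‖u‖ :=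
              (ContinuousLinearMap.adjoint L).le_opNorm u
          _ = ‖L‖ * ‖u‖ := by rw [ContinuousLinearMap.adjoint.norm_map]
          _ ≤ 1 * ‖u‖ := by
              have := norm_nonneg u
              nlinarith
          _ = ‖u‖ := one_mul _
      have h2 : ⟪v, u⟫ = ‖u‖ ^ 2 := by
        rw [hv, ContinuousLinearMap.adjoint_inner_left, hu, real_inner_self_eq_norm_sq]
      have h3 : ‖v - u‖ ^ 2 ≤ 0 := by
        rw [norm_sub_sq_real, h2]
        nlinarith [norm_nonneg v, norm_nonneg u]
      have h4 : ‖v - u‖ = 0 := by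
        nlinarith [norm_nonneg (v - u)]
      have := norm_eq_zero.mp h4
      exact sub_eq_zero.mp this
    -- inner products with fixed points are preserved
    have hinner : ∀ u, u ∈ fixSpace L → ⟪x - p, u⟫ = 0 := by
      intro u hu
      have hu' : L u = u := hfix u hu
      have hadju := hadj u hu'
      have hconst : ∀ k, ⟪a k, u⟫ = ⟪x, u⟫ := by
        intro k
        induction k with
        | zero => rfl
        | succ k ih =>
          calc ⟪a (k + 1), u⟫ = ⟪L (a k), u⟫ := by rw [hstep k]
            _ = ⟪a k, ContinuousLinearMap.adjoint L u⟫ :=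
                (ContinuousLinearMap.adjoint_inner_right L (a k) u).symm
            _ = ⟪a k, u⟫ := by rw [hadju]
            _ = ⟪x, u⟫ := ih
      have h1 : Tendsto (fun k => ⟪a k, u⟫) atTop (nhds ⟪p, u⟫) :=
        hp.inner tendsto_const_nhds
      have h2 : Tendsto (fun k => ⟪a k, u⟫) atTop (nhds ⟪x, u⟫) := by
        refine tendsto_const_nhds.congr fun k => (hconst k).symm
      have h3 : ⟪x, u⟫ = ⟪p, u⟫ := tendsto_nhds_unique h2 h1
      rw [inner_sub_left, h3, sub_self]
    have hproj : (Submodule.orthogonalProjectionOnto (fixSpace L) x : X) = p :=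
      by have := Submodule.eq_starProjection_of_mem_of_inner_eq_zero hpmem hinner; exact this
    rw [hproj]
    exact hp
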